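/- Let (φ_n)_{n≥0} be the standard Hermite functions on ℝ. Then for all nonnegative integers n, k, l: ‖x^k ∂_x^l φ_n‖_{L²(ℝ)} ≤ 2^{(k+l)/2} √((k+l+n)!/n!). -/

import Mathlib

open MeasureTheory Nat

/-- The standard Hermite functions `φ_n = a₊ⁿ φ₀ / √(n!)`, where
`a₊ = (x - d/dx)/√2` and `φ₀(x) = π^{-1/4} e^{-x²/2}`. -/
noncomputable def hermiteFun : ℕ → ℝ → ℝ
  | 0 => fun x => Real.pi ^ (-(1 : ℝ) / 4) * Real.exp (-x ^ 2 / 2)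
  | n + 1 => fun x =>
      (Real.sqrt (2 * (n + 1)))⁻¹ * (x * hermiteFun n x - deriv (hermiteFun n) x)

open MeasureTheory Nat Polynomial Filter

noncomputable def gaussF (x : ℝ) : ℝ := Real.exp (-x ^ 2 / 2)

lemma gaussF_pos (x : ℝ) : 0 < gaussF x := Real.exp_pos _

lemma hasDerivAt_gaussF (x : ℝ) : HasDerivAt gaussF (-x * gaussF x) x := by
  have h1 : HasDerivAt (fun y : ℝ => -y ^ 2 / 2) (-x) x := by
    have := (((hasDerivAt_pow 2 x)).neg).div_const 2
    refine this.congr_deriv ?_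
    push_cast; ring
  have := (Real.hasDerivAt_exp (-x ^ 2 / 2)).comp x h1
  refine HasDerivAt.congr_deriv this ?_
  show Real.exp (-x ^ 2 / 2) * -x = -x * Real.exp (-x ^ 2 / 2)
  ring

lemma contDiff_gaussF : ContDiff ℝ ⊤ gaussF := by
  have : ContDiff ℝ ⊤ (fun y : ℝ => -y ^ 2 / 2) := ((contDiff_id.pow 2).neg).div_const 2
  exact Real.contDiff_exp.comp this

lemma contDiff_polyEval (p : ℝ[X]) : ContDiff ℝ ⊤ fun x : ℝ => p.eval x := by
  induction p using Polynomial.induction_on' with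
  | monomial n c => simpa [Polynomial.eval_monomial] using (contDiff_const.mul (contDiff_id.pow n))
  | add p q hp hq => simpa using hp.add hq

lemma hasDerivAt_pg (p : ℝ[X]) (x : ℝ) :
    HasDerivAt (fun y => p.eval y * gaussF y)
      (((derivative p).eval x - x * p.eval x) * gaussF x) x := by
  have := (p.hasDerivAt x).mul (hasDerivAt_gaussF x)
  refine this.congr_deriv ?_
  ring

lemma deriv_pg (p : ℝ[X]) (x : ℝ) :
    deriv (fun y => p.eval y * gaussF y) x
      = ((derivative p).eval x - x * p.eval x) * gaussF x :=
  (hasDerivAt_pg p x).deriv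

lemma contDiff_pg (p : ℝ[X]) : ContDiff ℝ ⊤ (fun y => p.eval y * gaussF y) :=
  (contDiff_polyEval p).mul contDiff_gaussF

noncomputable def hPoly : ℕ → ℝ[X]
  | 0 => C (Real.pi ^ (-(1 : ℝ) / 4))
  | n + 1 => C (Real.sqrt (2 * (n + 1)))⁻¹ * (C 2 * X * hPoly n - derivative (hPoly n))

lemma hPoly_succ_def (n : ℕ) : hPoly (n + 1)
    = C (Real.sqrt (2 * ((n : ℝ) + 1)))⁻¹ * (C 2 * X * hPoly n - derivative (hPoly n)) := rfl

lemma hPoly_deriv (n : ℕ) :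
    derivative (hPoly n) = C (Real.sqrt (2 * (n : ℝ))) * hPoly (n - 1) := by
  induction n with
  | zero => simp [hPoly]
  | succ n ih =>
    set s := Real.sqrt (2 * ((n : ℝ) + 1)) with hs_def
    have hs : (0 : ℝ) < s := Real.sqrt_pos.2 (by positivity)
    have hss : s * s = 2 * ((n : ℝ) + 1) := Real.mul_self_sqrt (by positivity)
    have key : derivative (derivative (hPoly n))
        = C 2 * X * derivative (hPoly n) - C (2 * (n : ℝ)) * hPoly n := by
      rcases n with _ | m
      · simp [hPoly]
      · set t := Real.sqrt (2 * ((m : ℝ) + 1)) with ht_def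
        have ht : (0 : ℝ) < t := Real.sqrt_pos.2 (by positivity)
        have htt : t * t = 2 * ((m : ℝ) + 1) := Real.mul_self_sqrt (by positivity)
        have hinv : C t * C t⁻¹ = (1 : ℝ[X]) := by
          rw [← map_mul, mul_inv_cancel₀ ht.ne', map_one]
        have hp' : derivative (hPoly (m + 1)) = C t * hPoly m := by
          rw [ih, Nat.add_sub_cancel]
          congr 2
          push_cast; ring
        have hq' : derivative (hPoly m) = C 2 * X * hPoly m - C t * hPoly (m + 1) := by
          rw [hPoly_succ_def m, ← mul_assoc, hinv, one_mul]
          ring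
        rw [hp', derivative_mul, derivative_C, zero_mul, zero_add, hq']
        have h2 : (2 * ((m + 1 : ℕ) : ℝ)) = t * t := by rw [htt]; push_cast; ring
        rw [h2, map_mul]
        ring
    rw [hPoly_succ_def n, derivative_mul, derivative_C, zero_mul, zero_add, derivative_sub, key]
    have h1 : Real.sqrt (2 * ((n + 1 : ℕ) : ℝ)) = s := by rw [hs_def]; congr 1; push_cast; ring
    rw [Nat.add_sub_cancel, h1]
    have h2 : C s = C s⁻¹ * (C (2 * (n : ℝ)) + C 2) := by
      rw [← map_add, ← map_mul]
      congr 1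
      have : 2 * (n : ℝ) + 2 = s * s := by rw [hss]; ring
      rw [this, ← mul_assoc, inv_mul_cancel₀ hs.ne', one_mul]
    rw [h2, derivative_mul, derivative_mul, derivative_C, derivative_X]
    ring

lemma hermiteFun_eq (n : ℕ) : hermiteFun n = fun x => (hPoly n).eval x * gaussF x := by
  induction n with
  | zero => funext x; simp [hermiteFun, hPoly, gaussF]
  | succ n ih =>
    funext x
    show (Real.sqrt (2 * (n + 1)))⁻¹ * (x * hermiteFun n x - deriv (hermiteFun n) x) = _
    rw [ih, deriv_pg]
    simp [hPoly]
    ring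

lemma contDiff_hermiteFun (n : ℕ) : ContDiff ℝ ⊤ (hermiteFun n) := by
  rw [hermiteFun_eq]; exact contDiff_pg _

lemma deriv_hermiteFun_eq (n : ℕ) (x : ℝ) :
    deriv (hermiteFun n) x
      = ((derivative (hPoly n)).eval x - x * (hPoly n).eval x) * gaussF x := by
  rw [hermiteFun_eq, deriv_pg]

/-- lowering: `x φ_n + φ_n' = √(2n) φ_{n-1}`. -/
lemma lower_hermite (n : ℕ) (x : ℝ) :
    x * hermiteFun n x + deriv (hermiteFun n) x
      = Real.sqrt (2 * n) * hermiteFun (n - 1) x := by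
  rw [deriv_hermiteFun_eq, hermiteFun_eq, hermiteFun_eq, hPoly_deriv]
  simp only [eval_mul, eval_C]
  ring

/-- raising (definition): `x φ_n - φ_n' = √(2(n+1)) φ_{n+1}`. -/
lemma raise_hermite (n : ℕ) (x : ℝ) :
    x * hermiteFun n x - deriv (hermiteFun n) x
      = Real.sqrt (2 * ((n : ℝ) + 1)) * hermiteFun (n + 1) x := by
  have h : hermiteFun (n + 1) x
      = (Real.sqrt (2 * (n + 1)))⁻¹ * (x * hermiteFun n x - deriv (hermiteFun n) x) := rfl
  rw [h, ← mul_assoc, mul_inv_cancel₀ (Real.sqrt_pos.2 (by positivity)).ne', one_mul]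

lemma sqrt_half_eq (a : ℝ) (ha : 0 ≤ a) : Real.sqrt (2 * a) / 2 = Real.sqrt (a / 2) := by
  rw [show a / 2 = (2 * a) / 4 by ring, Real.sqrt_div (by positivity),
    show Real.sqrt 4 = 2 by
      rw [show (4 : ℝ) = 2 ^ 2 by norm_num, Real.sqrt_sq (by norm_num)]]

/-- `φ_n' = √(n/2) φ_{n-1} - √((n+1)/2) φ_{n+1}`. -/
lemma deriv_hermite (n : ℕ) (x : ℝ) :
    deriv (hermiteFun n) x
      = Real.sqrt ((n : ℝ) / 2) * hermiteFun (n - 1) x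
        - Real.sqrt (((n : ℝ) + 1) / 2) * hermiteFun (n + 1) x := by
  have h1 := lower_hermite n x
  have h2 := raise_hermite n x
  rw [← sqrt_half_eq _ (by positivity), ← sqrt_half_eq _ (by positivity)]
  push_cast at h1
  linarith

/-- `x φ_n = √((n+1)/2) φ_{n+1} + √(n/2) φ_{n-1}`. -/
lemma x_hermite (n : ℕ) (x : ℝ) :
    x * hermiteFun n x
      = Real.sqrt (((n : ℝ) + 1) / 2) * hermiteFun (n + 1) x
        + Real.sqrt ((n : ℝ) / 2) * hermiteFun (n - 1) x := by
  have h1 := lower_hermite n x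
  have h2 := raise_hermite n x
  rw [← sqrt_half_eq _ (by positivity), ← sqrt_half_eq _ (by positivity)]
  push_cast at h1
  linarith

-- integrability of p(x) e^{-x²}
lemma integrable_pG (p : ℝ[X]) :
    Integrable (fun x : ℝ => p.eval x * Real.exp (-x ^ 2)) := by
  induction p using Polynomial.induction_on' with
  | monomial n c =>
    simp only [eval_monomial]
    have h : Integrable (fun x : ℝ => x ^ n * Real.exp (-x ^ 2)) := by
      have := integrable_rpow_mul_exp_neg_mul_sq (b := 1) one_pos
        (s := (n : ℝ)) (neg_one_lt_zero.trans_le (Nat.cast_nonneg n))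
      simp only [Real.rpow_natCast, neg_mul, one_mul] at this
      exact this
    simpa [mul_assoc] using h.const_mul c
  | add p q hp hq =>
    simp only [eval_add, add_mul]
    exact hp.add hq

lemma tendsto_pG_atTop (p : ℝ[X]) :
    Tendsto (fun x : ℝ => p.eval x * Real.exp (-x ^ 2)) atTop (nhds 0) := by
  induction p using Polynomial.induction_on' with
  | monomial n c =>
    simp only [eval_monomial]
    have h : Tendsto (fun x : ℝ => x ^ n * Real.exp (-x ^ 2)) atTop (nhds 0) := by
      have hle : ∀ x : ℝ, 1 ≤ x → x ^ n * Real.exp (-x ^ 2) ≤ x ^ n * Real.exp (-x) := by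
        intro x hx
        apply mul_le_mul_of_nonneg_left _ (by positivity)
        apply Real.exp_le_exp.2
        nlinarith
      apply squeeze_zero' (eventually_atTop.2 ⟨0, fun x hx => by positivity⟩)
        (eventually_atTop.2 ⟨1, hle⟩) (Real.tendsto_pow_mul_exp_neg_atTop_nhds_zero n)
    simpa [mul_assoc] using (h.const_mul c).congr (by intro x; ring)
  | add p q hp hq =>
    simpa [eval_add, add_mul] using hp.add hq

lemma tendsto_pG_atBot (p : ℝ[X]) :
    Tendsto (fun x : ℝ => p.eval x * Real.exp (-x ^ 2)) atBot (nhds 0) := by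
  have h := tendsto_pG_atTop (p.comp (-X))
  have h2 := h.comp tendsto_neg_atBot_atTop
  simpa [Function.comp_def, eval_comp] using h2

lemma hasDerivAt_pG (p : ℝ[X]) (x : ℝ) :
    HasDerivAt (fun y => p.eval y * Real.exp (-y ^ 2))
      (((derivative p).eval x - 2 * x * p.eval x) * Real.exp (-x ^ 2)) x := by
  have hg : HasDerivAt (fun y : ℝ => Real.exp (-y ^ 2)) (-(2 * x) * Real.exp (-x ^ 2)) x := by
    have h1 : HasDerivAt (fun y : ℝ => -y ^ 2) (-(2 * x)) x := by
      have := (hasDerivAt_pow 2 x).neg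
      refine this.congr_deriv ?_; push_cast; ring
    have := (Real.hasDerivAt_exp (-x ^ 2)).comp x h1
    refine this.congr_deriv ?_; ring
  have := (p.hasDerivAt x).mul hg
  refine this.congr_deriv ?_; ring

lemma integral_deriv_pG (p : ℝ[X]) :
    ∫ x : ℝ, ((derivative p).eval x - 2 * x * p.eval x) * Real.exp (-x ^ 2) = 0 := by
  set f : ℝ → ℝ := fun x => p.eval x * Real.exp (-x ^ 2) with hf
  set f' : ℝ → ℝ := fun x => ((derivative p).eval x - 2 * x * p.eval x) * Real.exp (-x ^ 2)
  have hint : Integrable f' := by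
    have h1 := integrable_pG (derivative p)
    have h2 := integrable_pG (C 2 * X * p)
    have := h1.sub h2
    apply this.congr
    filter_upwards with x
    simp [f']
    ring
  have hft : Tendsto f atTop (nhds 0) := tendsto_pG_atTop p
  have hfb : Tendsto f atBot (nhds 0) := tendsto_pG_atBot p
  have key : Tendsto (fun T : ℝ => ∫ x in (-T)..T, f' x) atTop (nhds (∫ x : ℝ, f' x)) :=
    intervalIntegral_tendsto_integral hint tendsto_neg_atTop_atBot tendsto_id
  have key2 : ∀ T : ℝ, ∫ x in (-T)..T, f' x = f T - f (-T) := by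
    intro T
    apply intervalIntegral.integral_eq_sub_of_hasDerivAt
    · intro x _
      exact hasDerivAt_pG p x
    · exact hint.intervalIntegrable
  rw [funext key2] at key
  have key3 : Tendsto (fun T : ℝ => f T - f (-T)) atTop (nhds 0) := by
    have := hft.sub (hfb.comp tendsto_neg_atTop_atBot)
    simpa using this
  exact tendsto_nhds_unique key key3

lemma gaussF_sq (x : ℝ) : gaussF x * gaussF x = Real.exp (-x ^ 2) := by
  rw [gaussF, ← Real.exp_add]
  ring_nf

lemma parts_phi (m n : ℕ) :
    ∫ x : ℝ, (x * hermiteFun m x - deriv (hermiteFun m) x) * hermiteFun n x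
      = ∫ x : ℝ, hermiteFun m x * (x * hermiteFun n x + deriv (hermiteFun n) x) := by
  set p := hPoly m
  set q := hPoly n
  have hA : (fun x : ℝ => (x * hermiteFun m x - deriv (hermiteFun m) x) * hermiteFun n x)
      = fun x => ((C 2 * X * p - derivative p) * q).eval x * Real.exp (-x ^ 2) := by
    funext x
    rw [hermiteFun_eq m, hermiteFun_eq n, deriv_pg, ← gaussF_sq]
    simp only [eval_mul, eval_sub, eval_C, eval_X]
    ring
  have hB : (fun x : ℝ => hermiteFun m x * (x * hermiteFun n x + deriv (hermiteFun n) x))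
      = fun x => (p * derivative q).eval x * Real.exp (-x ^ 2) := by
    funext x
    rw [hermiteFun_eq m, hermiteFun_eq n, deriv_pg, ← gaussF_sq]
    simp only [eval_mul, eval_sub, eval_C, eval_X]
    ring
  rw [hA, hB, ← sub_eq_zero, ← integral_sub (integrable_pG _) (integrable_pG _)]
  have hdiff : (fun x : ℝ => ((C 2 * X * p - derivative p) * q).eval x * Real.exp (-x ^ 2)
        - (p * derivative q).eval x * Real.exp (-x ^ 2))
      = fun x => -(((derivative (p * q)).eval x - 2 * x * (p * q).eval x) * Real.exp (-x ^ 2)) := by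
    funext x
    simp only [derivative_mul, eval_mul, eval_sub, eval_add, eval_C, eval_X]
    ring
  rw [hdiff, integral_neg, integral_deriv_pG, neg_zero]

lemma normSq_hermite (n : ℕ) : ∫ x : ℝ, hermiteFun n x ^ 2 = 1 := by
  induction n with
  | zero =>
    have h : (fun x : ℝ => hermiteFun 0 x ^ 2)
        = fun x : ℝ => Real.pi ^ (-(1 : ℝ) / 2) * Real.exp (-x ^ 2) := by
      funext x
      show (Real.pi ^ (-(1 : ℝ) / 4) * Real.exp (-x ^ 2 / 2)) ^ 2 = _
      rw [mul_pow, ← Real.rpow_natCast (Real.pi ^ (-(1:ℝ)/4)) 2,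
        ← Real.rpow_mul Real.pi_pos.le,
        ← Real.exp_nat_mul]
      congr 1
      · congr 1
        push_cast; ring
      · congr 1
        push_cast; ring
    rw [h, MeasureTheory.integral_const_mul]
    have hg : ∫ x : ℝ, Real.exp (-x ^ 2) = Real.sqrt Real.pi := by
      have := integral_gaussian 1
      simpa using this
    rw [hg, Real.sqrt_eq_rpow, ← Real.rpow_add Real.pi_pos]
    norm_num
  | succ n ih =>
    have hs : (0:ℝ) < Real.sqrt (2 * ((n:ℝ) + 1)) := Real.sqrt_pos.2 (by positivity)
    have hdef : ∀ x : ℝ, hermiteFun (n+1) x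
        = (Real.sqrt (2 * ((n:ℝ) + 1)))⁻¹ * (x * hermiteFun n x - deriv (hermiteFun n) x) :=
      fun x => rfl
    have step1 : ∫ x : ℝ, hermiteFun (n+1) x ^ 2
        = (Real.sqrt (2 * ((n:ℝ) + 1)))⁻¹
          * ∫ x : ℝ, (x * hermiteFun n x - deriv (hermiteFun n) x) * hermiteFun (n+1) x := by
      rw [← MeasureTheory.integral_const_mul]
      congr 1
      funext x
      rw [pow_two]
      nth_rewrite 1 [hdef x]
      ring
    have hlow : ∀ x : ℝ, x * hermiteFun (n+1) x + deriv (hermiteFun (n+1)) x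
        = Real.sqrt (2 * ((n:ℝ) + 1)) * hermiteFun n x := by
      intro x
      have := lower_hermite (n+1) x
      rw [Nat.add_sub_cancel] at this
      push_cast at this
      exact this
    rw [step1, parts_phi]
    have step2 : (fun x : ℝ => hermiteFun n x * (x * hermiteFun (n+1) x + deriv (hermiteFun (n+1)) x))
        = fun x : ℝ => Real.sqrt (2 * ((n:ℝ) + 1)) * hermiteFun n x ^ 2 := by
      funext x
      rw [hlow x]
      ring
    rw [step2, MeasureTheory.integral_const_mul, ih, mul_one, inv_mul_cancel₀ hs.ne']

lemma iteratedDeriv_lin (l : ℕ) (a b : ℝ) (f g : ℝ → ℝ)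
    (hf : ContDiff ℝ ⊤ f) (hg : ContDiff ℝ ⊤ g) :
    iteratedDeriv l (fun x => a * f x - b * g x)
      = fun x => a * iteratedDeriv l f x - b * iteratedDeriv l g x := by
  funext x
  have h1 : (fun x => a * f x - b * g x) = (a • f - b • g) := by
    funext y; simp
  have hF : ContDiffOn ℝ l (a • f) Set.univ := ((hf.const_smul a).of_le le_top).contDiffOn
  have hG : ContDiffOn ℝ l (b • g) Set.univ := ((hg.const_smul b).of_le le_top).contDiffOn
  have hf' : ContDiffOn ℝ l f Set.univ := (hf.of_le le_top).contDiffOn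
  have hg' : ContDiffOn ℝ l g Set.univ := (hg.of_le le_top).contDiffOn
  rw [h1, ← iteratedDerivWithin_univ,
    iteratedDerivWithin_sub (Set.mem_univ x) uniqueDiffOn_univ (hF x (Set.mem_univ x)) (hG x (Set.mem_univ x)),
    iteratedDerivWithin_const_smul (Set.mem_univ x) uniqueDiffOn_univ a (hf' x (Set.mem_univ x)),
    iteratedDerivWithin_const_smul (Set.mem_univ x) uniqueDiffOn_univ b (hg' x (Set.mem_univ x)),
    iteratedDerivWithin_univ, iteratedDerivWithin_univ]
  simp

lemma sqrt_half_mul (y : ℝ) (hy : 0 ≤ y) :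
    Real.sqrt 2 / 2 * Real.sqrt y = Real.sqrt (y / 2) := by
  have h2 : Real.sqrt 2 * Real.sqrt 2 = 2 := Real.mul_self_sqrt two_pos.le
  rw [Real.sqrt_div hy]
  rw [eq_div_iff (Real.sqrt_pos.2 two_pos).ne']
  nlinarith [Real.sqrt_nonneg y, Real.sqrt_nonneg 2]

lemma num_ineq (m n : ℕ) :
    Real.sqrt (((n : ℝ) + 1) / 2) * (2 ^ ((m : ℝ) / 2) * Real.sqrt (((m + (n + 1))! : ℝ) / ((n + 1)! : ℝ)))
      + Real.sqrt ((n : ℝ) / 2) * (2 ^ ((m : ℝ) / 2) * Real.sqrt (((m + (n - 1))! : ℝ) / ((n - 1)! : ℝ)))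
    ≤ 2 ^ (((m : ℝ) + 1) / 2) * Real.sqrt ((((m + 1) + n)! : ℝ) / (n ! : ℝ)) := by
  have hA : m + 1 + n = m + (n + 1) := by omega
  rw [hA]
  set A := (m + (n + 1))! with hAdef
  have hApos : (0:ℝ) < (A : ℝ) := by exact_mod_cast (m + (n+1)).factorial_pos
  have h2 : (0:ℝ) < 2 ^ ((m : ℝ) / 2) := Real.rpow_pos_of_pos two_pos _
  have hsplit : (2:ℝ) ^ (((m : ℝ) + 1) / 2) = 2 ^ ((m : ℝ) / 2) * Real.sqrt 2 := by
    rw [show ((m : ℝ) + 1) / 2 = (m : ℝ) / 2 + 1 / 2 by ring, Real.rpow_add two_pos,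
      ← Real.sqrt_eq_rpow]
  have hT1 : Real.sqrt (((n : ℝ) + 1) / 2) * Real.sqrt ((A : ℝ) / ((n + 1)! : ℝ))
      ≤ Real.sqrt 2 / 2 * Real.sqrt ((A : ℝ) / (n ! : ℝ)) := by
    rw [sqrt_half_mul _ (by positivity), ← Real.sqrt_mul (by positivity)]
    apply Real.sqrt_le_sqrt
    apply le_of_eq
    have hfs : ((n + 1)! : ℝ) = ((n : ℝ) + 1) * (n ! : ℝ) := by
      push_cast [Nat.factorial_succ]; ring
    rw [hfs]
    have h1 : (0:ℝ) < (n ! : ℝ) := by exact_mod_cast n.factorial_pos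
    field_simp
  have hT2 : Real.sqrt ((n : ℝ) / 2) * Real.sqrt (((m + (n - 1))! : ℝ) / ((n - 1)! : ℝ))
      ≤ Real.sqrt 2 / 2 * Real.sqrt ((A : ℝ) / (n ! : ℝ)) := by
    rcases n with _ | j
    · simp [Real.sqrt_zero]
    · have hn1 : j + 1 - 1 = j := rfl
      rw [hn1, sqrt_half_mul _ (by positivity), ← Real.sqrt_mul (by positivity)]
      apply Real.sqrt_le_sqrt
      have hj : (0:ℝ) < (j ! : ℝ) := by exact_mod_cast j.factorial_pos
      have hjs : (((j+1)! : ℕ) : ℝ) = ((j:ℝ)+1) * (j ! : ℝ) := by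
        push_cast [Nat.factorial_succ]; ring
      have natkey : (j + 1) * (j + 1) * (m + j)! ≤ A := by
        rw [hAdef, show m + (j + 1 + 1) = (m + j + 1) + 1 by omega]
        calc (j + 1) * (j + 1) * (m + j)!
            ≤ ((m + j + 1) + 1) * ((m + j) + 1) * (m + j)! := by
              apply Nat.mul_le_mul_right
              apply Nat.mul_le_mul <;> omega
          _ = ((m + j + 1) + 1) * (((m + j) + 1) * (m + j)!) := by ring
          _ = ((m + j + 1) + 1) * (m + j + 1)! := by rw [Nat.factorial_succ]
          _ = ((m + j + 1) + 1)! := (Nat.factorial_succ _).symm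
      have key : ((j:ℝ) + 1) * ((j:ℝ) + 1) * ((m + j)! : ℝ) ≤ (A : ℝ) := by
        exact_mod_cast natkey
      have e1 : (((j+1 : ℕ)) : ℝ) / 2 * (((m + j)! : ℝ) / (j ! : ℝ))
          = ((((j+1 : ℕ)) : ℝ) * ((m + j)! : ℝ)) / (2 * (j ! : ℝ)) := by ring
      have e2 : ((A : ℝ)) / (((j+1)! : ℕ) : ℝ) / 2 = ((A : ℝ)) / (2 * (((j+1)! : ℕ) : ℝ)) := by
        ring
      rw [e1, e2, div_le_div_iff₀ (by positivity) (by positivity), hjs]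
      push_cast
      nlinarith [key, hj, hApos, (by exact_mod_cast (m+j).factorial_pos : (0:ℝ) < ((m + j)! : ℝ))]
  push_cast
  calc Real.sqrt (((n : ℝ) + 1) / 2) * (2 ^ ((m : ℝ) / 2) * Real.sqrt ((A : ℝ) / ((n + 1)! : ℝ)))
      + Real.sqrt ((n : ℝ) / 2) * (2 ^ ((m : ℝ) / 2) * Real.sqrt (((m + (n - 1))! : ℝ) / ((n - 1)! : ℝ)))
      = 2 ^ ((m : ℝ) / 2) * (Real.sqrt (((n : ℝ) + 1) / 2) * Real.sqrt ((A : ℝ) / ((n + 1)! : ℝ))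
        + Real.sqrt ((n : ℝ) / 2) * Real.sqrt (((m + (n - 1))! : ℝ) / ((n - 1)! : ℝ))) := by ring
    _ ≤ 2 ^ ((m : ℝ) / 2) * (Real.sqrt 2 / 2 * Real.sqrt ((A : ℝ) / (n ! : ℝ))
        + Real.sqrt 2 / 2 * Real.sqrt ((A : ℝ) / (n ! : ℝ))) :=
      mul_le_mul_of_nonneg_left (add_le_add hT1 hT2) h2.le
    _ = 2 ^ (((m : ℝ) + 1) / 2) * Real.sqrt ((A : ℝ) / (n ! : ℝ)) := by
      rw [hsplit]; ring

lemma memLp_hermite (n : ℕ) : MemLp (hermiteFun n) 2 (volume : Measure ℝ) := by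
  rw [hermiteFun_eq]
  refine (memLp_two_iff_integrable_sq
    (contDiff_pg (hPoly n)).continuous.aestronglyMeasurable).2 ?_
  have h : (fun x : ℝ => ((hPoly n).eval x * gaussF x) ^ 2)
      = fun x => ((hPoly n) * (hPoly n)).eval x * Real.exp (-x ^ 2) := by
    funext x
    rw [← gaussF_sq]
    simp only [eval_mul]
    ring
  rw [h]
  exact integrable_pG _

lemma eLpNorm_hermite (n : ℕ) : eLpNorm (hermiteFun n) 2 (volume : Measure ℝ) = 1 := by
  rw [(memLp_hermite n).eLpNorm_eq_integral_rpow_norm two_ne_zero ENNReal.ofNat_ne_top]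
  have h : (fun x : ℝ => ‖hermiteFun n x‖ ^ (ENNReal.toReal 2))
      = fun x : ℝ => hermiteFun n x ^ 2 := by
    funext x
    rw [ENNReal.toReal_ofNat, show (2:ℝ) = ((2:ℕ):ℝ) by norm_num, Real.rpow_natCast,
      Real.norm_eq_abs, sq_abs]
  rw [h, normSq_hermite]
  simp

lemma continuous_aux (k l n : ℕ) :
    Continuous fun x : ℝ => x ^ k * iteratedDeriv l (hermiteFun n) x :=
  (continuous_pow k).mul
    (((contDiff_hermiteFun n).differentiable_iteratedDeriv l
      (by simp)).continuous)

lemma coe_nnnorm_of_nonneg {c : ℝ} (hc : 0 ≤ c) : ‖c‖ₑ = ENNReal.ofReal c := by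
  rw [← ofReal_norm, Real.norm_of_nonneg hc]

lemma main_bound : ∀ m n k l : ℕ, k + l = m →
    eLpNorm (fun x : ℝ => x ^ k * iteratedDeriv l (hermiteFun n) x) 2 volume
      ≤ ENNReal.ofReal (2 ^ ((m : ℝ) / 2) * Real.sqrt (((m + n)! : ℝ) / (n ! : ℝ))) := by
  intro m
  induction m with
  | zero =>
    intro n k l h
    obtain ⟨rfl, rfl⟩ : k = 0 ∧ l = 0 := by omega
    have hfun : (fun x : ℝ => x ^ 0 * iteratedDeriv 0 (hermiteFun n) x) = hermiteFun n := by
      funext x; simp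
    rw [hfun, eLpNorm_hermite]
    have hne : (n ! : ℝ) ≠ 0 := by exact_mod_cast n.factorial_pos.ne'
    have h1 : ((0 + n)! : ℝ) / (n ! : ℝ) = 1 := by
      rw [Nat.zero_add]; exact div_self hne
    rw [h1, Real.sqrt_one, Nat.cast_zero, zero_div, Real.rpow_zero, mul_one]
    simp
  | succ m ih =>
    intro n k l hkl
    rcases l with _ | l'
    · -- case l = 0
      have hk : k = m + 1 := by omega
      subst hk
      set a := Real.sqrt (((n:ℝ)+1)/2) with ha_def
      set b := Real.sqrt ((n:ℝ)/2) with hb_def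
      have ha : 0 ≤ a := Real.sqrt_nonneg _
      have hb : 0 ≤ b := Real.sqrt_nonneg _
      have hfun : (fun x : ℝ => x ^ (m+1) * iteratedDeriv 0 (hermiteFun n) x)
          = a • (fun x : ℝ => x ^ m * iteratedDeriv 0 (hermiteFun (n+1)) x)
            + b • (fun x : ℝ => x ^ m * iteratedDeriv 0 (hermiteFun (n-1)) x) := by
        funext x
        simp only [iteratedDeriv_zero, Pi.add_apply, Pi.smul_apply, smul_eq_mul]
        rw [pow_succ, mul_assoc, x_hermite n x]
        ring
      rw [hfun]
      refine le_trans (eLpNorm_add_le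
        (((continuous_aux m 0 (n+1)).aestronglyMeasurable).const_smul a)
        (((continuous_aux m 0 (n-1)).aestronglyMeasurable).const_smul b)
        (by norm_num)) ?_
      rw [eLpNorm_const_smul, eLpNorm_const_smul, coe_nnnorm_of_nonneg ha, coe_nnnorm_of_nonneg hb]
      have h1 := ih (n+1) m 0 (by omega)
      have h2 := ih (n-1) m 0 (by omega)
      calc ENNReal.ofReal a * eLpNorm (fun x : ℝ => x ^ m * iteratedDeriv 0 (hermiteFun (n+1)) x) 2 volume
          + ENNReal.ofReal b * eLpNorm (fun x : ℝ => x ^ m * iteratedDeriv 0 (hermiteFun (n-1)) x) 2 volume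
          ≤ ENNReal.ofReal a * ENNReal.ofReal (2 ^ ((m : ℝ) / 2) * Real.sqrt (((m + (n+1))! : ℝ) / ((n+1)! : ℝ)))
            + ENNReal.ofReal b * ENNReal.ofReal (2 ^ ((m : ℝ) / 2) * Real.sqrt (((m + (n-1))! : ℝ) / ((n-1)! : ℝ))) :=
          add_le_add (mul_le_mul_right h1 _) (mul_le_mul_right h2 _)
        _ = ENNReal.ofReal (a * (2 ^ ((m : ℝ) / 2) * Real.sqrt (((m + (n+1))! : ℝ) / ((n+1)! : ℝ)))
            + b * (2 ^ ((m : ℝ) / 2) * Real.sqrt (((m + (n-1))! : ℝ) / ((n-1)! : ℝ)))) := by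
          rw [← ENNReal.ofReal_mul ha, ← ENNReal.ofReal_mul hb, ← ENNReal.ofReal_add (by positivity) (by positivity)]
        _ ≤ ENNReal.ofReal (2 ^ (((m:ℝ) + 1) / 2) * Real.sqrt ((((m + 1) + n)! : ℝ) / (n ! : ℝ))) := by
          apply ENNReal.ofReal_le_ofReal
          have := num_ineq m n
          push_cast at this ⊢
          linarith
        _ = ENNReal.ofReal (2 ^ (((m + 1 : ℕ) : ℝ) / 2) * Real.sqrt ((((m + 1) + n)! : ℝ) / (n ! : ℝ))) := by
          norm_num
    · -- case l = l' + 1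
      have hkl' : k + l' = m := by omega
      set a := Real.sqrt ((n:ℝ)/2) with ha_def
      set b := Real.sqrt (((n:ℝ)+1)/2) with hb_def
      have ha : 0 ≤ a := Real.sqrt_nonneg _
      have hb : 0 ≤ b := Real.sqrt_nonneg _
      have hfun : (fun x : ℝ => x ^ k * iteratedDeriv (l'+1) (hermiteFun n) x)
          = a • (fun x : ℝ => x ^ k * iteratedDeriv l' (hermiteFun (n-1)) x)
            - b • (fun x : ℝ => x ^ k * iteratedDeriv l' (hermiteFun (n+1)) x) := by
        funext x
        rw [iteratedDeriv_succ']
        have hd : deriv (hermiteFun n)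
            = fun y => Real.sqrt ((n:ℝ)/2) * hermiteFun (n-1) y
              - Real.sqrt (((n:ℝ)+1)/2) * hermiteFun (n+1) y := funext (deriv_hermite n)
        rw [hd, iteratedDeriv_lin l' _ _ _ _ (contDiff_hermiteFun _) (contDiff_hermiteFun _)]
        simp only [Pi.sub_apply, Pi.smul_apply, smul_eq_mul]
        ring
      rw [hfun]
      refine le_trans (eLpNorm_sub_le
        (((continuous_aux k l' (n-1)).aestronglyMeasurable).const_smul a)
        (((continuous_aux k l' (n+1)).aestronglyMeasurable).const_smul b)
        (by norm_num)) ?_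
      rw [eLpNorm_const_smul, eLpNorm_const_smul, coe_nnnorm_of_nonneg ha, coe_nnnorm_of_nonneg hb]
      have h1 := ih (n-1) k l' (by omega)
      have h2 := ih (n+1) k l' (by omega)
      calc ENNReal.ofReal a * eLpNorm (fun x : ℝ => x ^ k * iteratedDeriv l' (hermiteFun (n-1)) x) 2 volume
          + ENNReal.ofReal b * eLpNorm (fun x : ℝ => x ^ k * iteratedDeriv l' (hermiteFun (n+1)) x) 2 volume
          ≤ ENNReal.ofReal a * ENNReal.ofReal (2 ^ ((m : ℝ) / 2) * Real.sqrt (((m + (n-1))! : ℝ) / ((n-1)! : ℝ)))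
            + ENNReal.ofReal b * ENNReal.ofReal (2 ^ ((m : ℝ) / 2) * Real.sqrt (((m + (n+1))! : ℝ) / ((n+1)! : ℝ))) :=
          add_le_add (mul_le_mul_right h1 _) (mul_le_mul_right h2 _)
        _ = ENNReal.ofReal (a * (2 ^ ((m : ℝ) / 2) * Real.sqrt (((m + (n-1))! : ℝ) / ((n-1)! : ℝ)))
            + b * (2 ^ ((m : ℝ) / 2) * Real.sqrt (((m + (n+1))! : ℝ) / ((n+1)! : ℝ)))) := by
          rw [← ENNReal.ofReal_mul ha, ← ENNReal.ofReal_mul hb, ← ENNReal.ofReal_add (by positivity) (by positivity)]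
        _ ≤ ENNReal.ofReal (2 ^ (((m:ℝ) + 1) / 2) * Real.sqrt ((((m + 1) + n)! : ℝ) / (n ! : ℝ))) := by
          apply ENNReal.ofReal_le_ofReal
          have := num_ineq m n
          push_cast at this ⊢
          linarith
        _ = ENNReal.ofReal (2 ^ (((m + 1 : ℕ) : ℝ) / 2) * Real.sqrt ((((m + 1) + n)! : ℝ) / (n ! : ℝ))) := by
          norm_num

/-- Estimate (6.4) of Lemma 6.4: `‖x^k ∂_x^l φ_n‖_{L²} ≤ 2^{(k+l)/2} √((k+l+n)!/n!)`. -/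
theorem hermite_weighted_L2_bound (n k l : ℕ) :
    eLpNorm (fun x : ℝ => x ^ k * iteratedDeriv l (hermiteFun n) x) 2 volume ≤
      ENNReal.ofReal (2 ^ (((k : ℝ) + l) / 2) *
        Real.sqrt (((k + l + n)! : ℝ) / (n ! : ℝ))) := by
  have := main_bound (k + l) n k l rfl
  convert this using 3
  push_cast
  ring
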